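/- Let k be an integer, m a nonnegative integer, B a nonzero real number, and ω, Ω real with Ω̃ := Ω + (2m+1). If Ω̃ + (−1)^k·i·e^{iω} − (1/B)·sin(πΩ/2)·e^{iπΩ/2} = 0, then B satisfies the quadratic relation (Ω̃² − 1)·B² + Ω̃·sin(πΩ̃)·B + cos²(πΩ̃/2) = 0. Moreover its (quarter-)discriminant satisfies the identity (Ω̃·sin(πΩ̃)/2)² − (Ω̃² − 1)·cos²(πΩ̃/2) = cos²(πΩ̃/2)·(1 − (Ω̃·cos(πΩ̃/2))²). -/

import Mathlib

open Real

/-- Any solution of the 2-scale characteristic equation satisfies the quadratic relation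
`(Ω̃²-1)B² + Ω̃ sin(πΩ̃) B + cos²(πΩ̃/2) = 0`, whose (quarter-)discriminant equals
`cos²(πΩ̃/2)(1 - (Ω̃ cos(πΩ̃/2))²)`. -/
theorem stmt_4 (k : ℤ) (m : ℕ) (B : ℝ) (hB : B ≠ 0) (ω Ω : ℝ)
    (Ωt : ℝ) (hΩt : Ωt = Ω + (2*m+1))
    (h : (Ωt : ℂ) + (-1:ℂ)^k * Complex.I * Complex.exp (Complex.I * (ω : ℂ))
      - (1/(B:ℂ)) * ((Real.sin (π*Ω/2) : ℝ) : ℂ) * Complex.exp (Complex.I * ((π*Ω/2 : ℝ) : ℂ)) = 0) :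
    (Ωt^2 - 1) * B^2 + Ωt * Real.sin (π*Ωt) * B + (Real.cos (π*Ωt/2))^2 = 0
    ∧ (Ωt * Real.sin (π*Ωt) / 2)^2 - (Ωt^2 - 1) * (Real.cos (π*Ωt/2))^2
      = (Real.cos (π*Ωt/2))^2 * (1 - (Ωt * Real.cos (π*Ωt/2))^2) := by
  set s := Real.sin (π*Ω/2) with hs
  set c := Real.cos (π*Ω/2) with hc
  have hsc : s^2 + c^2 = 1 := Real.sin_sq_add_cos_sq _
  -- trig conversions
  have hc2 : Real.cos (π*Ωt/2)^2 = s^2 := by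
    have : π*Ωt/2 = (π*Ω/2 + π/2) + (m:ℤ) * π := by rw [hΩt]; push_cast; ring
    rw [this, Real.cos_add_int_mul_pi, Real.cos_add_pi_div_two, mul_pow, ← hs]
    have : ((-1:ℝ)^(m:ℤ))^2 = 1 := by
      rw [← zpow_natCast ((-1:ℝ)^(m:ℤ)), ← zpow_mul, mul_comm, zpow_mul]
      norm_num
    rw [this]; ring
  have hsin : Real.sin (π*Ωt) = -(2*s*c) := by
    have h1 : π*Ωt = π*Ω + ((2*m+1 : ℤ)) * π := by rw [hΩt]; push_cast; ring
    have h2 : π*Ω = 2*(π*Ω/2) := by ring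
    rw [h1, Real.sin_add_int_mul_pi, h2, Real.sin_two_mul, ← hs, ← hc]
    have : ((-1:ℝ))^(2*(m:ℤ)+1) = -1 := by
      rw [zpow_add₀ (by norm_num : (-1:ℝ) ≠ 0), zpow_mul]
      norm_num
    rw [this]; ring
  -- complex part
  have hE : ‖(-1:ℂ)^k * Complex.I * Complex.exp (Complex.I * (ω:ℂ))‖ = 1 := by
    simp [Complex.norm_exp]
  have heq : (-1:ℂ)^k * Complex.I * Complex.exp (Complex.I * (ω:ℂ))
      = (1/(B:ℂ)) * (s:ℂ) * Complex.exp (Complex.I * ((π*Ω/2 : ℝ):ℂ)) - (Ωt:ℂ) := by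
    linear_combination h
  have hns : Complex.normSq ((1/(B:ℂ)) * (s:ℂ) * Complex.exp (Complex.I * ((π*Ω/2 : ℝ):ℂ)) - (Ωt:ℂ)) = 1 := by
    rw [← heq, ← Complex.sq_norm, hE]; norm_num
  rw [mul_comm Complex.I, Complex.exp_mul_I, ← Complex.ofReal_cos, ← Complex.ofReal_sin] at hns
  simp only [Complex.normSq_apply, Complex.mul_re, Complex.mul_im, Complex.add_re, Complex.add_im,
    Complex.sub_re, Complex.sub_im, Complex.ofReal_re, Complex.ofReal_im, Complex.I_re,
    Complex.I_im, Complex.div_re, Complex.div_im, Complex.one_re, Complex.one_im, ← hs, ← hc] at hns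
  have key : s^2 - 2*Ωt*s*c*B + (Ωt^2-1)*B^2 = 0 := by
    simp only [mul_zero, zero_mul, add_zero, sub_zero, zero_add, mul_one, one_mul, zero_div, div_zero] at hns
    field_simp at hns
    nlinarith [hns, sq_nonneg B]
  constructor
  · rw [hc2, hsin]; linear_combination key
  · rw [hc2]
    have h4 : (Ωt * Real.cos (π*Ωt/2))^2 = Ωt^2 * s^2 := by rw [mul_pow, hc2]
    rw [h4, hsin]
    linear_combination (Ωt^2*s^2) * hsc
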